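/- Let X be a strictly positive random variable such that both X and 1/X are integrable. Then for every t ≥ 0, P( |log X − E[log X]| ≥ t ) ≤ 2 · E[X] · E[1/X] · e^{−t}. -/

import Mathlib

open MeasureTheory

theorem stmt19 {Ω : Type} [MeasurableSpace Ω] (P : Measure Ω) [IsProbabilityMeasure P]
    (X : Ω → ℝ) (hmX : Measurable X) (hpos : ∀ᵐ ω ∂P, 0 < X ω)
    (hX : Integrable X P) (hXinv : Integrable (fun ω => (X ω)⁻¹) P)
    (t : ℝ) (ht : 0 ≤ t) :
    (P {ω | t ≤ |Real.log (X ω) - ∫ ω', Real.log (X ω') ∂P|}).toReal ≤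
      2 * (∫ ω, X ω ∂P) * (∫ ω, (X ω)⁻¹ ∂P) * Real.exp (-t) := by
  set m := ∫ ω', Real.log (X ω') ∂P with hm
  -- integrability of log X
  have hlog : Integrable (fun ω => Real.log (X ω)) P := by
    refine Integrable.mono (hX.add hXinv) (hmX.log.aestronglyMeasurable) ?_
    filter_upwards [hpos] with ω hω
    have h1 : Real.log (X ω) ≤ X ω + (X ω)⁻¹ := by
      have := Real.log_le_sub_one_of_pos hω
      have : (X ω)⁻¹ > 0 := inv_pos.mpr hω
      nlinarith [Real.log_le_sub_one_of_pos hω]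
    have h2 : -Real.log (X ω) ≤ X ω + (X ω)⁻¹ := by
      have h3 := Real.log_le_sub_one_of_pos (inv_pos.mpr hω)
      rw [Real.log_inv] at h3
      nlinarith
    have hnn : 0 ≤ X ω + (X ω)⁻¹ := by positivity
    simp only [Pi.add_apply, Real.norm_eq_abs]
    rw [abs_of_nonneg hnn, abs_le]
    exact ⟨by linarith, h1⟩
  -- Jensen: exp m ≤ ∫ X and exp (-m) ≤ ∫ X⁻¹
  have hexpX : (fun ω => Real.exp (Real.log (X ω))) =ᵐ[P] X := by
    filter_upwards [hpos] with ω hω using Real.exp_log hω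
  have hexpXinv : (fun ω => Real.exp (-Real.log (X ω))) =ᵐ[P] fun ω => (X ω)⁻¹ := by
    filter_upwards [hpos] with ω hω
    rw [← Real.log_inv, Real.exp_log (inv_pos.mpr hω)]
  have hJ1 : Real.exp m ≤ ∫ ω, X ω ∂P := by
    have := convexOn_exp.map_integral_le Real.continuous_exp.continuousOn isClosed_univ
      (Filter.Eventually.of_forall fun ω => Set.mem_univ _) hlog
      (by exact hX.congr hexpX.symm)
    calc Real.exp m ≤ ∫ ω, Real.exp (Real.log (X ω)) ∂P := this
      _ = ∫ ω, X ω ∂P := integral_congr_ae hexpX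
  have hJ2 : Real.exp (-m) ≤ ∫ ω, (X ω)⁻¹ ∂P := by
    have := convexOn_exp.map_integral_le Real.continuous_exp.continuousOn isClosed_univ
      (Filter.Eventually.of_forall fun ω => Set.mem_univ _) hlog.neg
      (by exact hXinv.congr hexpXinv.symm)
    simp only [Pi.neg_apply] at this
    rw [integral_neg] at this
    calc Real.exp (-m) ≤ ∫ ω, Real.exp (-Real.log (X ω)) ∂P := this
      _ = ∫ ω, (X ω)⁻¹ ∂P := integral_congr_ae hexpXinv
  have hIX : 0 ≤ ∫ ω, X ω ∂P := (Real.exp_pos m).le.trans hJ1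
  have hIXinv : 0 ≤ ∫ ω, (X ω)⁻¹ ∂P := (Real.exp_pos (-m)).le.trans hJ2
  -- Markov bounds
  have hA : (P {ω | t ≤ Real.log (X ω) - m}).toReal ≤
      (∫ ω, X ω ∂P) * (∫ ω, (X ω)⁻¹ ∂P) * Real.exp (-t) := by
    have hsub : P {ω | t ≤ Real.log (X ω) - m} ≤ P {ω | Real.exp (m + t) ≤ X ω} := by
      apply measure_mono_ae
      filter_upwards [hpos] with ω hω h
      have h' : t ≤ Real.log (X ω) - m := h
      have : m + t ≤ Real.log (X ω) := by linarith
      calc Real.exp (m + t) ≤ Real.exp (Real.log (X ω)) := Real.exp_le_exp.mpr this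
        _ = X ω := Real.exp_log hω
    have hmar := mul_meas_ge_le_integral_of_nonneg
      (hpos.mono fun ω hω => hω.le) hX (Real.exp (m + t))
    have htr : (P {ω | t ≤ Real.log (X ω) - m}).toReal ≤
        (P {ω | Real.exp (m + t) ≤ X ω}).toReal :=
      ENNReal.toReal_mono (measure_ne_top _ _) hsub
    have h1 : (P {ω | Real.exp (m + t) ≤ X ω}).toReal ≤
        (∫ ω, X ω ∂P) * Real.exp (-(m + t)) := by
      rw [Real.exp_neg, ← div_eq_mul_inv, le_div_iff₀ (Real.exp_pos _), mul_comm]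
      exact hmar
    refine htr.trans (h1.trans ?_)
    rw [neg_add, Real.exp_add]
    rw [mul_assoc]
    exact mul_le_mul_of_nonneg_left
      (mul_le_mul_of_nonneg_right hJ2 (Real.exp_pos _).le) hIX
  have hB : (P {ω | t ≤ m - Real.log (X ω)}).toReal ≤
      (∫ ω, X ω ∂P) * (∫ ω, (X ω)⁻¹ ∂P) * Real.exp (-t) := by
    have hsub : P {ω | t ≤ m - Real.log (X ω)} ≤ P {ω | Real.exp (t - m) ≤ (X ω)⁻¹} := by
      apply measure_mono_ae
      filter_upwards [hpos] with ω hω h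
      have h' : t ≤ m - Real.log (X ω) := h
      have : t - m ≤ -Real.log (X ω) := by linarith
      have := Real.exp_le_exp.mpr this
      rw [← Real.log_inv, Real.exp_log (inv_pos.mpr hω)] at this
      exact this
    have hmar := mul_meas_ge_le_integral_of_nonneg
      (hpos.mono fun ω hω => (inv_pos.mpr hω).le) hXinv (Real.exp (t - m))
    have htr : (P {ω | t ≤ m - Real.log (X ω)}).toReal ≤
        (P {ω | Real.exp (t - m) ≤ (X ω)⁻¹}).toReal :=
      ENNReal.toReal_mono (measure_ne_top _ _) hsub
    have h1 : (P {ω | Real.exp (t - m) ≤ (X ω)⁻¹}).toReal ≤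
        (∫ ω, (X ω)⁻¹ ∂P) * Real.exp (-(t - m)) := by
      rw [Real.exp_neg, ← div_eq_mul_inv, le_div_iff₀ (Real.exp_pos _), mul_comm]
      exact hmar
    refine htr.trans (h1.trans ?_)
    have : Real.exp (-(t - m)) = Real.exp m * Real.exp (-t) := by
      rw [← Real.exp_add]; ring_nf
    rw [this, ← mul_assoc]
    calc (∫ ω, (X ω)⁻¹ ∂P) * Real.exp m * Real.exp (-t)
        ≤ (∫ ω, (X ω)⁻¹ ∂P) * (∫ ω, X ω ∂P) * Real.exp (-t) := by
          exact mul_le_mul_of_nonneg_right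
            (mul_le_mul_of_nonneg_left hJ1 hIXinv) (Real.exp_pos _).le
      _ = (∫ ω, X ω ∂P) * (∫ ω, (X ω)⁻¹ ∂P) * Real.exp (-t) := by ring
  -- combine
  have hsub : {ω | t ≤ |Real.log (X ω) - m|} ⊆
      {ω | t ≤ Real.log (X ω) - m} ∪ {ω | t ≤ m - Real.log (X ω)} := by
    intro ω h
    simp only [Set.mem_setOf_eq] at h
    rcases le_abs.mp h with h | h
    · exact Or.inl h
    · exact Or.inr (by simp only [Set.mem_setOf_eq]; linarith)
  have hms : (P {ω | t ≤ |Real.log (X ω) - m|}).toReal ≤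
      (P {ω | t ≤ Real.log (X ω) - m}).toReal + (P {ω | t ≤ m - Real.log (X ω)}).toReal := by
    rw [← ENNReal.toReal_add (measure_ne_top _ _) (measure_ne_top _ _)]
    exact ENNReal.toReal_mono (by simp [ENNReal.add_ne_top, measure_ne_top])
      ((measure_mono hsub).trans (measure_union_le _ _))
  calc (P {ω | t ≤ |Real.log (X ω) - m|}).toReal
      ≤ _ + _ := hms
    _ ≤ (∫ ω, X ω ∂P) * (∫ ω, (X ω)⁻¹ ∂P) * Real.exp (-t) +
        (∫ ω, X ω ∂P) * (∫ ω, (X ω)⁻¹ ∂P) * Real.exp (-t) := add_le_add hA hB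
    _ = 2 * (∫ ω, X ω ∂P) * (∫ ω, (X ω)⁻¹ ∂P) * Real.exp (-t) := by ring
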